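/- (Lemma 1, necessity direction, finite-user version.) Let ι be a finite index set and let S be a convex set of vectors x : ι → ℝ with x(i) > 0 for all i. Suppose x ∈ S satisfies Σ_{i∈ι} ln x(i) ≥ Σ_{i∈ι} ln y(i) for every y ∈ S. Then for every y ∈ S, Σ_{i∈ι} (y(i) − x(i))/x(i) ≤ 0. (A maximizer of the sum of logarithms of rates over a convex feasible rate region is proportionally fair.) -/

import Mathlib

/-- Lemma 1, necessity direction (finite-user version): a maximizer of the sum of
logarithms of rates over a convex feasible rate region contained in the positive
orthant is proportionally fair. -/
theorem log_max_implies_pf (ι : Type*) [Fintype ι] (S : Set (ι → ℝ))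
    (hconv : Convex ℝ S) (hpos : ∀ x ∈ S, ∀ i, 0 < x i)
    (x : ι → ℝ) (hx : x ∈ S)
    (hmax : ∀ y ∈ S, ∑ i, Real.log (y i) ≤ ∑ i, Real.log (x i)) :
    ∀ y ∈ S, ∑ i, (y i - x i) / x i ≤ 0 := by
  intro y hy
  set d : ι → ℝ := fun i => y i - x i with hd
  set g : ℝ → ℝ := fun t => ∑ i, Real.log (x i + t * d i) with hg
  have hxpos := hpos x hx
  -- g has derivative Σ dᵢ/xᵢ at 0
  have hder : HasDerivAt g (∑ i, d i / x i) 0 := by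
    apply HasDerivAt.fun_sum
    intro i _
    have h1 : HasDerivAt (fun t : ℝ => x i + t * d i) (d i) 0 := by
      simpa using ((hasDerivAt_id (0:ℝ)).mul_const (d i)).const_add (x i)
    have h2 : HasDerivAt Real.log (x i)⁻¹ (x i + 0 * d i) := by
      simpa using Real.hasDerivAt_log (by simpa using (hxpos i).ne')
    have h3 := h2.comp 0 h1
    rw [Function.comp_def] at h3
    rw [div_eq_inv_mul]
    exact h3
  -- membership of the segment point
  have hmem : ∀ t ∈ Set.Ioc (0:ℝ) 1, (fun i => x i + t * d i) ∈ S := by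
    intro t ht
    have := hconv hx hy (by linarith [ht.2] : (0:ℝ) ≤ 1 - t) ht.1.le (by ring)
    convert this using 1
    funext i
    simp [hd]
    ring
  have hgle : ∀ t ∈ Set.Ioc (0:ℝ) 1, g t ≤ g 0 := by
    intro t ht
    have := hmax _ (hmem t ht)
    simpa [hg, hd] using this
  -- derivative within Ioi 0, slope limit
  have hslope := (hder.hasDerivWithinAt (s := Set.Ioi (0:ℝ)))
  rw [hasDerivWithinAt_iff_tendsto_slope] at hslope
  have hev : ∀ᶠ t in nhdsWithin (0:ℝ) (Set.Ioi 0 \ {0}), slope g 0 t ≤ 0 := by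
    filter_upwards [nhdsWithin_mono (0:ℝ) Set.diff_subset (Ioc_mem_nhdsGT
      (by norm_num : (0:ℝ) < 1))] with t ht
    have htpos : 0 < t := ht.1
    have hle : g t - g 0 ≤ 0 := by linarith [hgle t ht]
    rw [slope_def_field, sub_zero]
    exact div_nonpos_of_nonpos_of_nonneg hle htpos.le
  have hne : (nhdsWithin (0:ℝ) (Set.Ioi 0 \ {0})).NeBot := by
    have heq : Set.Ioi (0:ℝ) \ {0} = Set.Ioi 0 := by
      ext t; simp only [Set.mem_diff, Set.mem_singleton_iff, Set.mem_Ioi, and_iff_left_iff_imp]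
      intro h; exact h.ne'
    rw [heq]; infer_instance
  have hD : (∑ i, d i / x i) ≤ 0 := le_of_tendsto hslope hev
  calc ∑ i, (y i - x i) / x i = ∑ i, d i / x i := by simp [hd]
    _ ≤ 0 := hD
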